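/- For complex numbers u with |u| < 1/q, setting a = -(q-1)u and b = -u, the expression 1 - b(a+b) + a(k-1)u, divided by 1 - b(a+b), equals (1 - (qk - k + 1)u²)/(1 - qu²). In particular, the determinant of I - uT for the one-ray weighted graph with base group of order k equals (1 - (qk - k + 1)u²)/(1 - qu²), so its Bass-Ihara zeta function is (1 - qu²)/(1 - (qk - k + 1)u²). -/

import Mathlib

/-- For `a = -(q-1)u`, `b = -u` and `|u| < 1/q`, we have
`(1 - b(a+b) + a(k-1)u)/(1 - b(a+b)) = (1 - (qk - k + 1)u²)/(1 - qu²)`. -/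
theorem det_one_ray (q k : ℕ) (hq : 2 ≤ q) (hk : 1 ≤ k) (u : ℂ)
    (hu : ‖u‖ < 1 / q) (a b : ℂ)
    (ha : a = -((q : ℂ) - 1) * u) (hb : b = -u) :
    (1 - b * (a + b) + a * ((k : ℂ) - 1) * u) / (1 - b * (a + b)) =
      (1 - ((q : ℂ) * k - k + 1) * u ^ 2) / (1 - (q : ℂ) * u ^ 2) := by
  subst ha hb
  have h : 1 - -u * (-((q : ℂ) - 1) * u + -u) = 1 - (q : ℂ) * u ^ 2 := by ring
  rw [h]
  congr 1
  ring
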